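/- Let n and b be positive integers, let σ be a nonempty finite set with |σ| ≤ n, let (γ_i)_{i∈σ} be positive real numbers and (t_i)_{i∈σ} nonnegative real numbers such that Σ_{i∈σ} t_i/γ_i = 1. Then there exist natural numbers (k_i)_{i∈σ} with Σ_{i∈σ} k_i = b and γ_i·k_i ≤ (b+n)·t_i for every i ∈ σ. Equivalently, setting β_i = 1/γ_i and a_i = γ_i·k_i, there exists a = (a_i) with a_i ∈ γ_i·ℕ, Σ_{i∈σ} β_i·a_i = b, and t_i ≥ a_i/(b+n) for all i ∈ σ. -/
import Mathlib

private lemma reduce_sum {ι : Type*} (s : Finset ι) (b : ℕ) :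
    ∀ (d : ℕ) (k : ι → ℕ), ∑ i ∈ s, k i = b + d →
      ∃ k' : ι → ℕ, (∀ i, k' i ≤ k i) ∧ ∑ i ∈ s, k' i = b := by
  classical
  intro d
  induction d with
  | zero => intro k hk; exact ⟨k, fun i => le_rfl, by simpa using hk⟩
  | succ d ih =>
    intro k hk
    have hpos : 0 < ∑ i ∈ s, k i := by omega
    obtain ⟨i, hi, hki⟩ : ∃ i ∈ s, 0 < k i := by
      by_contra h
      push_neg at h
      have : ∑ i ∈ s, k i = 0 := Finset.sum_eq_zero fun i hi => by
        have := h i hi; omega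
      omega
    set k₂ := Function.update k i (k i - 1) with hk₂
    have hsum2 : ∑ j ∈ s, k₂ j = b + d := by
      have : ∑ j ∈ s, k₂ j + 1 = ∑ j ∈ s, k j := by
        rw [← Finset.sum_erase_add s k₂ hi, ← Finset.sum_erase_add s k hi]
        have h1 : ∑ j ∈ s.erase i, k₂ j = ∑ j ∈ s.erase i, k j :=
          Finset.sum_congr rfl fun j hj =>
            Function.update_of_ne (Finset.ne_of_mem_erase hj) _ _
        have h2 : k₂ i = k i - 1 := Function.update_self _ _ _
        rw [h1, h2]; omega
      omega
    obtain ⟨k', h1, h2⟩ := ih k₂ hsum2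
    refine ⟨k', fun j => (h1 j).trans ?_, h2⟩
    by_cases hji : j = i
    · subst hji
      simp only [hk₂, Function.update_self]; omega
    · simp [hk₂, Function.update_of_ne hji]

theorem exists_delta_sigma_element {ι : Type*} (n b : ℕ) (hn : 0 < n) (hb : 0 < b)
    (σ : Finset ι) (hσ : σ.Nonempty) (hcard : σ.card ≤ n)
    (γ : ι → ℝ) (hγ : ∀ i ∈ σ, 0 < γ i)
    (t : ι → ℝ) (ht : ∀ i ∈ σ, 0 ≤ t i)
    (hsum : ∑ i ∈ σ, t i / γ i = 1) :
    ∃ k : ι → ℕ, ∑ i ∈ σ, k i = b ∧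
      ∀ i ∈ σ, γ i * (k i : ℝ) ≤ ((b : ℝ) + (n : ℝ)) * t i := by
  set r : ι → ℝ := fun i => ((b : ℝ) + n) * t i / γ i with hr
  set K : ι → ℕ := fun i => ⌊r i⌋₊ with hK
  have hrnn : ∀ i ∈ σ, 0 ≤ r i := fun i hi =>
    div_nonneg (mul_nonneg (by positivity) (ht i hi)) (hγ i hi).le
  have hfloor_le : ∀ i ∈ σ, (K i : ℝ) ≤ r i := fun i hi => Nat.floor_le (hrnn i hi)
  -- sum of r over σ equals b + n
  have hrsum : ∑ i ∈ σ, r i = (b : ℝ) + n := by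
    have : ∑ i ∈ σ, r i = ((b : ℝ) + n) * ∑ i ∈ σ, t i / γ i := by
      rw [Finset.mul_sum]
      exact Finset.sum_congr rfl fun i hi => by rw [hr]; ring
    rw [this, hsum, mul_one]
  -- b ≤ ∑ K i
  have hlt : ((b : ℝ) + n) < ∑ i ∈ σ, ((K i : ℝ) + 1) := by
    rw [← hrsum]
    refine Finset.sum_lt_sum_of_nonempty hσ fun i hi => ?_
    exact Nat.lt_floor_add_one (r i)
  have hble : b ≤ ∑ i ∈ σ, K i := by
    have h1 : ((b : ℝ) + n) < (∑ i ∈ σ, K i : ℕ) + (σ.card : ℝ) := by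
      rw [Finset.sum_add_distrib] at hlt
      simpa [Finset.sum_const, nsmul_eq_mul, mul_one] using hlt
    have h2 : (b : ℝ) + n < (∑ i ∈ σ, K i : ℕ) + (n : ℝ) := by
      calc (b : ℝ) + n < (∑ i ∈ σ, K i : ℕ) + (σ.card : ℝ) := h1
        _ ≤ (∑ i ∈ σ, K i : ℕ) + (n : ℝ) := by
            have : (σ.card : ℝ) ≤ (n : ℝ) := by exact_mod_cast hcard
            linarith
    have : (b : ℝ) < (∑ i ∈ σ, K i : ℕ) := by linarith
    exact_mod_cast this.le
  obtain ⟨d, hd⟩ := Nat.exists_eq_add_of_le hble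
  obtain ⟨k', hk'le, hk'sum⟩ := reduce_sum σ b d K hd
  refine ⟨k', hk'sum, fun i hi => ?_⟩
  have h1 : (k' i : ℝ) ≤ K i := by exact_mod_cast hk'le i
  have h2 : γ i * (K i : ℝ) ≤ ((b : ℝ) + n) * t i := by
    have := hfloor_le i hi
    rw [hr] at this
    calc γ i * (K i : ℝ) ≤ γ i * (((b : ℝ) + n) * t i / γ i) :=
          mul_le_mul_of_nonneg_left this (hγ i hi).le
      _ = ((b : ℝ) + n) * t i := by
          rw [mul_div_assoc']; exact mul_div_cancel_left₀ _ (hγ i hi).ne'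
  calc γ i * (k' i : ℝ) ≤ γ i * (K i : ℝ) :=
        mul_le_mul_of_nonneg_left h1 (hγ i hi).le
    _ ≤ ((b : ℝ) + n) * t i := h2
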